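/- Let H be a class of C-Lipschitz functions from a pseudometric space (X, ρ_X) to a metric space (Y, ρ_Y), equipped with the sup metric ‖f − g‖ = sup_{x∈X} ρ_Y(f(x), g(x)). Then for any δ > 0, N(H, ‖·‖, δ) ≤ N(Y, ρ_Y, δ/2)^{N(X, ρ_X, δ/(2C))}, i.e., the covering number of H is at most the covering number of Y raised to the covering number of X. -/

import Mathlib

/-- a class `H` of `C`-Lipschitz functions from a pseudometric space `X`
to a metric space `Y` admits, in the sup metric, a `δ`-cover of size at most
`N(Y, δ/2) ^ N(X, δ/(2C))`: from any `δ/(2C)`-cover of `X` and `δ/2`-cover of `Y`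
one builds a `δ`-cover of `H` of at most that many functions. -/
theorem lipschitz_class_covering_number
    {X Y : Type*} [MetricSpace Y]
    (ρX : X → X → ℝ)
    (hnonneg : ∀ x1 x2, 0 ≤ ρX x1 x2)
    (hrefl : ∀ x, ρX x x = 0)
    (hsymm : ∀ x1 x2, ρX x1 x2 = ρX x2 x1)
    (htri : ∀ x1 x2 x3, ρX x1 x3 ≤ ρX x1 x2 + ρX x2 x3)
    (C : ℝ) (hC : 0 < C)
    (H : Set (X → Y))
    (hHlip : ∀ h ∈ H, ∀ x x', dist (h x) (h x') ≤ C * ρX x x')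
    (δ : ℝ) (hδ : 0 < δ)
    (SX : Finset X) (SY : Finset Y)
    (hSX : ∀ x, ∃ s ∈ SX, ρX x s ≤ δ / (2 * C))
    (hSY : ∀ y, ∃ s ∈ SY, dist y s ≤ δ / 2) :
    ∃ SH : Finset (X → Y), SH.card ≤ SY.card ^ SX.card ∧
      ∀ h ∈ H, ∃ f ∈ SH, ∀ x, dist (h x) (f x) ≤ δ := by
  classical
  choose π hπmem hπd using hSX
  choose q hqmem hqd using hSY
  let T : Finset (↥SX → Y) := Fintype.piFinset (fun _ : ↥SX => SY)
  refine ⟨T.image (fun g x => g ⟨π x, hπmem x⟩), ?_, ?_⟩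
  · calc (T.image _).card ≤ T.card := Finset.card_image_le
      _ = SY.card ^ SX.card := by
        simp [T, Fintype.card_piFinset]
  · intro h hH
    refine ⟨fun x => q (h (π x)), ?_, ?_⟩
    · refine Finset.mem_image.2 ⟨fun s : ↥SX => q (h s), ?_, rfl⟩
      exact Fintype.mem_piFinset.2 fun s => hqmem _
    · intro x
      have h1 : dist (h x) (h (π x)) ≤ C * (δ / (2 * C)) :=
        le_trans (hHlip h hH x (π x)) (by
          have := hπd x
          nlinarith [hnonneg x (π x)])
      have h2 : dist (h (π x)) (q (h (π x))) ≤ δ / 2 := hqd _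
      have hc : C * (δ / (2 * C)) = δ / 2 := by field_simp
      calc dist (h x) (q (h (π x)))
          ≤ dist (h x) (h (π x)) + dist (h (π x)) (q (h (π x))) := dist_triangle _ _ _
        _ ≤ δ / 2 + δ / 2 := by rw [hc] at h1; linarith
        _ = δ := by ring
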